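/- Let I be a square-free monomial ideal of R = k[x_1,...,x_d] with μ(I) minimal monomial generators. If I^n = I^{(n)} for every n ≤ ⌈μ(I)/2⌉, then I^n = I^{(n)} for every positive integer n. -/

import Mathlib

open MvPolynomial

private lemma sum_apply_wt {d : ℕ} (Fj : Finset (Fin d)) :
    ∀ (M : Multiset (Fin d →₀ ℕ)), ∑ i ∈ Fj, M.sum i = (M.map (fun x => ∑ i ∈ Fj, x i)).sum := by
  refine Multiset.induction ?_ ?_
  · simp
  · intro x M ih
    simp [Finsupp.add_apply, Finset.sum_add_distrib, ih]

private lemma card_le_wt_sum {d : ℕ} (Fj : Finset (Fin d)) (M : Multiset (Fin d →₀ ℕ))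
    (hM : ∀ x ∈ M, 1 ≤ ∑ i ∈ Fj, x i) : Multiset.card M ≤ ∑ i ∈ Fj, M.sum i := by
  induction M using Multiset.induction with
  | empty => simp
  | cons x M ih =>
      have h1 : 1 ≤ ∑ i ∈ Fj, x i := hM x (Multiset.mem_cons_self x M)
      have h2 : Multiset.card M ≤ ∑ i ∈ Fj, M.sum i := ih (fun y hy => hM y (Multiset.mem_cons_of_mem hy))
      simp only [Multiset.sum_cons, Finsupp.add_apply, Finset.sum_add_distrib, Multiset.card_cons]
      omega

private lemma wt_tsub_add {d : ℕ} (Fj : Finset (Fin d)) {g c : Fin d →₀ ℕ} (h : g ≤ c) :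
    (∑ i ∈ Fj, (c - g) i) + ∑ i ∈ Fj, g i = ∑ i ∈ Fj, c i := by
  rw [← Finset.sum_add_distrib]
  refine Finset.sum_congr rfl fun i _ => ?_
  rw [Finsupp.tsub_apply]
  have := Finsupp.le_def.mp h i
  omega

private lemma wt_single_le {d : ℕ} (Fj : Finset (Fin d)) (v : Fin d) :
    ∑ i ∈ Fj, (Finsupp.single v 1 : Fin d →₀ ℕ) i ≤ 1 := by
  classical
  calc ∑ i ∈ Fj, (Finsupp.single v 1 : Fin d →₀ ℕ) i
      = ∑ i ∈ Fj, if v = i then 1 else 0 := by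
        refine Finset.sum_congr rfl fun i _ => ?_; rw [Finsupp.single_apply]
    _ ≤ 1 := by rw [Finset.sum_ite_eq]; split <;> simp

/-- arithmetic characterization of membership in powers of a variable ideal -/
private lemma single_decomp {d : ℕ} (Fj : Finset (Fin d)) :
    ∀ (n : ℕ) (a : Fin d →₀ ℕ), n ≤ ∑ i ∈ Fj, a i →
      ∃ M : Multiset (Fin d →₀ ℕ), Multiset.card M = n ∧
        (∀ x ∈ M, ∃ i ∈ Fj, x = Finsupp.single i 1) ∧ M.sum ≤ a := by
  intro n
  induction n with
  | zero => intro a _; exact ⟨0, by simp, by simp, by simp⟩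
  | succ n ih =>
      intro a ha
      have hex : ∃ i ∈ Fj, 1 ≤ a i := by
        by_contra hc
        push_neg at hc
        have : ∑ i ∈ Fj, a i = 0 := Finset.sum_eq_zero (fun i hi => by have := hc i hi; omega)
        omega
      obtain ⟨i, hiF, hia⟩ := hex
      have hsle : Finsupp.single i 1 ≤ a := Finsupp.single_le_iff.mpr hia
      have hsum : (∑ l ∈ Fj, ((a - Finsupp.single i 1 : Fin d →₀ ℕ)) l) + ∑ l ∈ Fj, (Finsupp.single i 1 : Fin d →₀ ℕ) l = ∑ l ∈ Fj, a l :=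
        wt_tsub_add Fj hsle
      have h1 : ∑ l ∈ Fj, (Finsupp.single i 1 : Fin d →₀ ℕ) l ≤ 1 := wt_single_le Fj i
      have ha' : n ≤ ∑ l ∈ Fj, ((a - Finsupp.single i 1 : Fin d →₀ ℕ)) l := by omega
      obtain ⟨M, hcard, hmem, hle⟩ := ih _ ha'
      refine ⟨Finsupp.single i 1 ::ₘ M, by simp [hcard], ?_, ?_⟩
      · intro x hx
        rcases Multiset.mem_cons.mp hx with h | h
        · exact ⟨i, hiF, h⟩
        · exact hmem x h
      · rw [Multiset.sum_cons]
        calc Finsupp.single i 1 + M.sum ≤ Finsupp.single i 1 + (a - Finsupp.single i 1) :=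
              add_le_add_right hle _
          _ = a := by rw [add_tsub_cancel_of_le hsle] -- might be `add_tsub_cancel_iff_le`?


private lemma wt_of_single_decomp {d : ℕ} (Fj : Finset (Fin d)) (n : ℕ) (a : Fin d →₀ ℕ)
    (M : Multiset (Fin d →₀ ℕ)) (hcard : Multiset.card M = n)
    (hmem : ∀ x ∈ M, ∃ i ∈ Fj, x = Finsupp.single i 1) (hle : M.sum ≤ a) :
    n ≤ ∑ i ∈ Fj, a i := by
  classical
  have h1 : Multiset.card M ≤ ∑ i ∈ Fj, M.sum i := by
    refine card_le_wt_sum Fj M (fun x hx => ?_)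
    obtain ⟨i, hiF, rfl⟩ := hmem x hx
    have : ∑ l ∈ Fj, (Finsupp.single i 1 : Fin d →₀ ℕ) l
        = ∑ l ∈ Fj, if i = l then 1 else 0 := by
      refine Finset.sum_congr rfl fun l _ => ?_; rw [Finsupp.single_apply]
    rw [this, Finset.sum_ite_eq, if_pos hiF]
  have h2 : ∑ i ∈ Fj, M.sum i ≤ ∑ i ∈ Fj, a i :=
    Finset.sum_le_sum (fun i _ => Finsupp.le_def.mp hle i)
  omega

private lemma span_mon_pow (k : Type*) [Field k] {d : ℕ} (S : Set (Fin d →₀ ℕ)) (n : ℕ) :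
    (Ideal.span ((fun a => monomial a (1 : k)) '' S)) ^ n
      = Ideal.span ((fun a => monomial a (1 : k)) ''
          {b | ∃ M : Multiset (Fin d →₀ ℕ), Multiset.card M = n ∧ (∀ x ∈ M, x ∈ S) ∧ M.sum = b}) := by
  induction n with
  | zero =>
      rw [pow_zero]
      have hset : {b : Fin d →₀ ℕ | ∃ M : Multiset (Fin d →₀ ℕ),
          Multiset.card M = 0 ∧ (∀ x ∈ M, x ∈ S) ∧ M.sum = b} = {0} := by
        ext b
        constructor
        · rintro ⟨M, hM, -, rfl⟩
          rw [Multiset.card_eq_zero] at hM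
          simp [hM]
        · rintro rfl
          exact ⟨0, by simp, by simp, by simp⟩
      rw [hset, Set.image_singleton]
      have h1 : (monomial (0 : Fin d →₀ ℕ) (1 : k)) = 1 := by
        simp [monomial_zero']
      rw [h1, Ideal.span_singleton_one, Ideal.one_eq_top]
  | succ n ih =>
      rw [pow_succ, ih, Ideal.span_mul_span']
      congr 1
      ext z
      constructor
      · rintro ⟨x, ⟨bx, ⟨M, hcard, hmem, rfl⟩, rfl⟩, y, ⟨by', hby, rfl⟩, rfl⟩
        refine ⟨M.sum + by', ⟨by' ::ₘ M, by simp [hcard], ?_, by simp [add_comm]⟩, ?_⟩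
        · intro x hx
          rcases Multiset.mem_cons.mp hx with h | h
          · exact h ▸ hby
          · exact hmem x h
        · simp [monomial_mul]
      · rintro ⟨b, ⟨M, hcard, hmem, rfl⟩, rfl⟩
        have hM : M ≠ 0 := by
          intro h
          rw [h] at hcard; simp at hcard
        obtain ⟨g, hg⟩ := Multiset.exists_mem_of_ne_zero hM
        obtain ⟨M', rfl⟩ := Multiset.exists_cons_of_mem hg
        refine ⟨monomial M'.sum 1, ⟨M'.sum, ⟨M', by simpa using hcard, fun x hx => hmem x (Multiset.mem_cons_of_mem hx), rfl⟩, rfl⟩,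
          monomial g 1, ⟨g, hmem g hg, rfl⟩, ?_⟩
        simp [monomial_mul, Multiset.sum_cons, add_comm]

private lemma mono_mem_span_pow (k : Type*) [Field k] {d : ℕ} (S : Set (Fin d →₀ ℕ)) (n : ℕ)
    (b : Fin d →₀ ℕ) :
    (monomial b (1 : k)) ∈ (Ideal.span ((fun a => monomial a (1 : k)) '' S)) ^ n ↔
      ∃ M : Multiset (Fin d →₀ ℕ), Multiset.card M = n ∧ (∀ x ∈ M, x ∈ S) ∧ M.sum ≤ b := by
  classical
  rw [span_mon_pow, mem_ideal_span_monomial_image]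
  rw [support_monomial, if_neg (one_ne_zero)]
  constructor
  · intro hb
    obtain ⟨si, ⟨M, hcard, hmem, rfl⟩, hle⟩ := hb b (Finset.mem_singleton_self b)
    exact ⟨M, hcard, hmem, hle⟩
  · rintro ⟨M, hcard, hmem, hle⟩ xi hxi
    rw [Finset.mem_singleton] at hxi
    exact ⟨M.sum, ⟨M, hcard, hmem, rfl⟩, hxi ▸ hle⟩
private lemma key_comb {d s : ℕ} (F : Fin s → Finset (Fin d)) (G : Finset (Fin d →₀ ℕ))
    (n : ℕ) (hn : 2 ≤ n)
    (Hcov : ∀ g ∈ G, ∀ j, 1 ≤ ∑ i ∈ F j, g i)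
    (Hsf : ∀ g ∈ G, ∀ i, g i ≤ 1)
    (Hlow : ∀ b : Fin d →₀ ℕ, (∀ j, n - 1 ≤ ∑ i ∈ F j, b i) →
      ∃ M : Multiset (Fin d →₀ ℕ), Multiset.card M = n - 1 ∧ (∀ x ∈ M, x ∈ G) ∧ M.sum ≤ b)
    (Hmu : G.card ≤ 2 * n - 2)
    (a : Fin d →₀ ℕ) (ha : ∀ j, n ≤ ∑ i ∈ F j, a i) :
    ∃ M : Multiset (Fin d →₀ ℕ), Multiset.card M = n ∧ (∀ x ∈ M, x ∈ G) ∧ M.sum ≤ a := by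
  classical
  -- obtain a generator g₀ below a
  obtain ⟨S₀, hS₀card, hS₀mem, hS₀le⟩ := Hlow a (fun j => by have := ha j; omega)
  have hS₀ne : S₀ ≠ 0 := by
    intro h; rw [h] at hS₀card; simp at hS₀card; omega
  obtain ⟨g₀, hg₀S₀⟩ := Multiset.exists_mem_of_ne_zero hS₀ne
  have hg₀G : g₀ ∈ G := hS₀mem g₀ hg₀S₀
  have hg₀a : g₀ ≤ a := by
    obtain ⟨S₀', rfl⟩ := Multiset.exists_cons_of_mem hg₀S₀
    calc g₀ ≤ g₀ + S₀'.sum := le_add_right (le_refl g₀)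
      _ = (g₀ ::ₘ S₀').sum := (Multiset.sum_cons g₀ S₀').symm
      _ ≤ a := hS₀le
  -- the "deficit zero" finisher
  have done0 : ∀ c : Fin d →₀ ℕ, (∑ v ∈ g₀.support, (n - c v)) = 0 →
      ∃ M : Multiset (Fin d →₀ ℕ), Multiset.card M = n ∧ (∀ x ∈ M, x ∈ G) ∧ M.sum ≤ c := by
    intro c hc
    refine ⟨Multiset.replicate n g₀, by simp, ?_, ?_⟩
    · intro x hx
      rw [Multiset.eq_of_mem_replicate hx]; exact hg₀G
    · rw [Multiset.sum_replicate]
      rw [Finsupp.le_def]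
      intro u
      rw [Finsupp.smul_apply, smul_eq_mul]
      by_cases hu : g₀ u = 0
      · simp [hu]
      · have husup : u ∈ g₀.support := Finsupp.mem_support_iff.mpr hu
        have h1 : n - c u = 0 := by
          have := Finset.sum_eq_zero_iff.mp hc u husup
          exact this
        have h2 : g₀ u ≤ 1 := Hsf g₀ hg₀G u
        nlinarith [Nat.le_of_sub_eq_zero h1]
  -- main chain induction on deficit bound
  have chain : ∀ (N : ℕ) (c : Fin d →₀ ℕ), (∑ v ∈ g₀.support, (n - c v)) ≤ N →
      (∀ j, n ≤ ∑ i ∈ F j, c i) → g₀ ≤ c →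
      ∃ M : Multiset (Fin d →₀ ℕ), Multiset.card M = n ∧ (∀ x ∈ M, x ∈ G) ∧ M.sum ≤ c := by
    intro N
    induction N with
    | zero =>
        intro c hΦ _ _
        exact done0 c (Nat.le_zero.mp hΦ)
    | succ N ihN =>
        intro c hΦ hτ hg₀c
        by_cases h0 : (∑ v ∈ g₀.support, (n - c v)) = 0
        · exact done0 c h0
        · obtain ⟨v, hvsup, hvne⟩ := Finset.exists_ne_zero_of_sum_ne_zero h0
          have hcv : c v < n := by omega
          have hg₀v : 1 ≤ g₀ v := Nat.one_le_iff_ne_zero.mpr (Finsupp.mem_support_iff.mp hvsup)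
          have hcv1 : 1 ≤ c v := le_trans hg₀v (Finsupp.le_def.mp hg₀c v)
          set e : Fin d →₀ ℕ := Finsupp.single v 1 with he
          have hec : e ≤ c := Finsupp.single_le_iff.mpr hcv1
          -- τ(c - e) ≥ n - 1
          have hτ' : ∀ j, n - 1 ≤ ∑ i ∈ F j, (c - e) i := by
            intro j
            have h1 := wt_tsub_add (F j) hec
            have h2 := wt_single_le (F j) v
            have h3 := hτ j
            rw [← he] at h2
            omega
          obtain ⟨S, hScard, hSmem, hSle⟩ := Hlow (c - e) hτ'
          have hSc : S.sum ≤ c := le_trans hSle tsub_le_self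
          set c' : Fin d →₀ ℕ := c + (c - S.sum) with hc'
          have hcc' : c ≤ c' := le_add_right (le_refl c)
          have hid : c' + S.sum = c + c := by
            rw [hc', add_assoc, tsub_add_cancel_of_le hSc]
          -- pointwise: c' v ≥ c v + 1
          have hSv : S.sum v ≤ c v - 1 := by
            have h1 := Finsupp.le_def.mp hSle v
            rw [Finsupp.tsub_apply] at h1
            have h2 : e v = 1 := by rw [he, Finsupp.single_apply, if_pos rfl]
            omega
          have hstep : c v + 1 ≤ c' v := by
            rw [hc', Finsupp.add_apply, Finsupp.tsub_apply]
            have := Finsupp.le_def.mp hSc v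
            omega
          have hmono : ∀ u, c u ≤ c' u := fun u => Finsupp.le_def.mp hcc' u
          have hΦ' : (∑ u ∈ g₀.support, (n - c' u)) ≤ N := by
            have hlt : (∑ u ∈ g₀.support, (n - c' u)) < ∑ u ∈ g₀.support, (n - c u) := by
              refine Finset.sum_lt_sum (fun u _ => Nat.sub_le_sub_left (hmono u) n) ⟨v, hvsup, ?_⟩
              have := hstep
              omega
            omega
          have hτc' : ∀ j, n ≤ ∑ i ∈ F j, c' i := by
            intro j
            calc n ≤ ∑ i ∈ F j, c i := hτ j
              _ ≤ ∑ i ∈ F j, c' i := Finset.sum_le_sum (fun i _ => hmono i)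
          obtain ⟨T, hTcard, hTmem, hTle⟩ := ihN c' hΦ' hτc' (le_trans hg₀c hcc')
          -- assemble M and pigeonhole
          set M : Multiset (Fin d →₀ ℕ) := T + S with hM
          have hMcard : Multiset.card M = n + (n - 1) := by
            rw [hM, Multiset.card_add, hTcard, hScard]
          have hMmem : ∀ x ∈ M, x ∈ G := by
            intro x hx
            rcases Multiset.mem_add.mp hx with h | h
            · exact hTmem x h
            · exact hSmem x h
          have hMsum : M.sum ≤ c + c := by
            rw [hM, Multiset.sum_add, ← hid]
            exact add_le_add_left hTle S.sum
          have hnd : ¬ M.Nodup := by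
            intro hnd
            have h1 : M.toFinset.card = Multiset.card M :=
              Multiset.toFinset_card_eq_card_iff_nodup.mpr hnd
            have h2 : M.toFinset ⊆ G := by
              intro x hx
              exact hMmem x (Multiset.mem_toFinset.mp hx)
            have h3 := Finset.card_le_card h2
            omega
          obtain ⟨g, hgcount⟩ : ∃ g, 2 ≤ M.count g := by
            rw [Multiset.nodup_iff_count_le_one] at hnd
            push_neg at hnd
            obtain ⟨g, hg⟩ := hnd
            exact ⟨g, hg⟩
          have hgM : g ∈ M := Multiset.count_pos.mp (by omega)
          have hgG : g ∈ G := hMmem g hgM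
          have hrep : Multiset.replicate 2 g ≤ M := Multiset.le_count_iff_replicate_le.mp hgcount
          set M' : Multiset (Fin d →₀ ℕ) := M - Multiset.replicate 2 g with hM'
          have hM'id : M' + Multiset.replicate 2 g = M := tsub_add_cancel_of_le hrep
          have hM'card : Multiset.card M' + 2 = n + (n - 1) := by
            have := congrArg Multiset.card hM'id
            rw [Multiset.card_add, Multiset.card_replicate] at this
            omega
          have hsum' : M'.sum + (g + g) = M.sum := by
            have := congrArg Multiset.sum hM'id
            rwa [Multiset.sum_add, Multiset.sum_replicate, two_nsmul] at this
          have hgc : g ≤ c := by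
            rw [Finsupp.le_def]
            intro u
            have h1 : M.sum u ≤ c u + c u := by
              have := Finsupp.le_def.mp hMsum u
              rwa [Finsupp.add_apply] at this
            have h2 : g u + g u ≤ M.sum u := by
              have : g + g ≤ M.sum := by
                rw [← hsum']
                exact le_add_self
              have := Finsupp.le_def.mp this u
              rwa [Finsupp.add_apply] at this
            omega
          have hwt : ∀ j, n - 1 ≤ ∑ i ∈ F j, (c - g) i := by
            intro j
            have hX : Multiset.card M' ≤ ∑ i ∈ F j, M'.sum i := by
              refine card_le_wt_sum (F j) M' (fun x hx => ?_)
              have hxM : x ∈ M := Multiset.mem_of_le (Multiset.sub_le_self M _) hx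
              exact Hcov x (hMmem x hxM) j
            have hMe : ∑ i ∈ F j, M'.sum i + ((∑ i ∈ F j, g i) + ∑ i ∈ F j, g i)
                = ∑ i ∈ F j, M.sum i := by
              rw [← hsum']
              simp [Finsupp.add_apply, Finset.sum_add_distrib]
            have hMc : ∑ i ∈ F j, M.sum i ≤ (∑ i ∈ F j, c i) + ∑ i ∈ F j, c i := by
              calc ∑ i ∈ F j, M.sum i ≤ ∑ i ∈ F j, (c + c) i :=
                    Finset.sum_le_sum (fun i _ => Finsupp.le_def.mp hMsum i)
                _ = (∑ i ∈ F j, c i) + ∑ i ∈ F j, c i := by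
                    simp [Finsupp.add_apply, Finset.sum_add_distrib]
            have hcg := wt_tsub_add (F j) hgc
            have hτj := hτ j
            omega
          obtain ⟨S'', hS''card, hS''mem, hS''le⟩ := Hlow (c - g) hwt
          refine ⟨g ::ₘ S'', by rw [Multiset.card_cons, hS''card]; omega, ?_, ?_⟩
          · intro x hx
            rcases Multiset.mem_cons.mp hx with h | h
            · exact h ▸ hgG
            · exact hS''mem x h
          · rw [Multiset.sum_cons]
            calc g + S''.sum ≤ g + (c - g) := add_le_add_right hS''le g
              _ = c := add_tsub_cancel_of_le hgc
  exact chain (∑ v ∈ g₀.support, (n - a v)) a (le_refl _) ha hg₀a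

/-- let `I` be a square-free monomial ideal of `R = k[x_1,…,x_d]` with
minimal primes `Q_1,…,Q_s`, symbolic powers `I^{(n)} = ⋂_j Q_j^n`, and minimal monomial
generating set `{x^a : a ∈ G}` (so `μ(I) = |G|`). If `I^n = I^{(n)}` for every
`n ≤ ⌈μ(I)/2⌉`, then `I^n = I^{(n)}` for every positive integer `n`. -/
theorem ordinary_eq_symbolic_of_half_mu (k : Type*) [Field k] (d s : ℕ)
    (F : Fin s → Finset (Fin d))
    (Q : Fin s → Ideal (MvPolynomial (Fin d) k))
    (hQ : ∀ j, Q j = Ideal.span (X '' (F j : Set (Fin d))))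
    (I : Ideal (MvPolynomial (Fin d) k)) (hI : I = ⨅ j, Q j)
    (hmin : I.minimalPrimes = Set.range Q)
    (G : Finset (Fin d →₀ ℕ))
    (hG : I = Ideal.span ((fun a => monomial a (1 : k)) '' (G : Set (Fin d →₀ ℕ))))
    (hsf : ∀ a ∈ G, ∀ i, a i ≤ 1)
    (hGmin : ∀ a ∈ G, ∀ b ∈ G, a ≤ b → a = b)
    (h : ∀ n : ℕ, 1 ≤ n → n ≤ ⌈(G.card : ℚ) / 2⌉₊ → I ^ n = ⨅ j, Q j ^ n) :
    ∀ n : ℕ, 1 ≤ n → I ^ n = ⨅ j, Q j ^ n := by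
  classical
  have hQI : ∀ j, I ≤ Q j := fun j => hI ▸ iInf_le Q j
  have hQ' : ∀ j, Q j = Ideal.span ((fun a => monomial a (1 : k)) ''
      ((fun i => Finsupp.single i 1) '' (F j : Set (Fin d)))) := by
    intro j
    rw [hQ j, Set.image_image]
    congr 1
  have hQmem : ∀ (j : Fin s) (m : ℕ) (b : Fin d →₀ ℕ),
      (monomial b (1 : k) ∈ Q j ^ m ↔ m ≤ ∑ i ∈ F j, b i) := by
    intro j m b
    rw [hQ' j, mono_mem_span_pow]
    constructor
    · rintro ⟨M, hcard, hmem, hle⟩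
      refine wt_of_single_decomp (F j) m b M hcard ?_ hle
      intro x hx
      obtain ⟨i, hi, rfl⟩ := hmem x hx
      exact ⟨i, hi, rfl⟩
    · intro hm
      obtain ⟨M, hcard, hmem, hle⟩ := single_decomp (F j) m b hm
      refine ⟨M, hcard, ?_, hle⟩
      intro x hx
      obtain ⟨i, hi, rfl⟩ := hmem x hx
      exact ⟨i, hi, rfl⟩
  have hImem : ∀ (m : ℕ) (b : Fin d →₀ ℕ),
      (monomial b (1 : k) ∈ I ^ m ↔
        ∃ M : Multiset (Fin d →₀ ℕ), Multiset.card M = m ∧ (∀ x ∈ M, x ∈ G) ∧ M.sum ≤ b) := by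
    intro m b
    rw [hG, mono_mem_span_pow]
    constructor
    · rintro ⟨M, h1, h2, h3⟩
      exact ⟨M, h1, fun x hx => Finset.mem_coe.mp (h2 x hx), h3⟩
    · rintro ⟨M, h1, h2, h3⟩
      exact ⟨M, h1, fun x hx => Finset.mem_coe.mpr (h2 x hx), h3⟩
  have Hcov : ∀ g ∈ G, ∀ j, 1 ≤ ∑ i ∈ F j, g i := by
    intro g hg j
    have hgI : monomial g (1 : k) ∈ I := by
      rw [hG]
      exact Ideal.subset_span ⟨g, Finset.mem_coe.mpr hg, rfl⟩
    have hgQ : monomial g (1 : k) ∈ Q j ^ 1 := by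
      rw [pow_one]
      exact hQI j hgI
    exact (hQmem j 1 g).mp hgQ
  intro n
  induction n using Nat.strong_induction_on with
  | _ n IH =>
    intro hn
    rcases eq_or_lt_of_le hn with h1 | hn2
    · rw [← h1]
      rw [pow_one, hI]
      exact iInf_congr fun j => (pow_one (Q j)).symm
    · by_cases hcase : n ≤ ⌈(G.card : ℚ) / 2⌉₊
      · exact h n hn hcase
      · push_neg at hcase
        have Hmu : G.card ≤ 2 * n - 2 := by
          have h1 : ((G.card : ℚ)) / 2 ≤ (⌈(G.card : ℚ) / 2⌉₊ : ℚ) := Nat.le_ceil _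
          have h2 : (G.card : ℚ) ≤ 2 * (⌈(G.card : ℚ) / 2⌉₊ : ℚ) := by linarith
          have h3 : G.card ≤ 2 * ⌈(G.card : ℚ) / 2⌉₊ := by exact_mod_cast h2
          omega
        have Hprev : I ^ (n - 1) = ⨅ j, Q j ^ (n - 1) := IH (n - 1) (by omega) (by omega)
        have Hlow : ∀ b : Fin d →₀ ℕ, (∀ j, n - 1 ≤ ∑ i ∈ F j, b i) →
            ∃ M : Multiset (Fin d →₀ ℕ), Multiset.card M = n - 1 ∧ (∀ x ∈ M, x ∈ G) ∧ M.sum ≤ b := by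
          intro b hb
          have hbQ : monomial b (1 : k) ∈ ⨅ j, Q j ^ (n - 1) :=
            Submodule.mem_iInf _ |>.mpr fun j => (hQmem j (n - 1) b).mpr (hb j)
          rw [← Hprev] at hbQ
          exact (hImem (n - 1) b).mp hbQ
        refine le_antisymm (le_iInf fun j => Ideal.pow_right_mono (hQI j) n) ?_
        intro p hp
        rw [hG, span_mon_pow, mem_ideal_span_monomial_image]
        intro b hb
        have hτ : ∀ j, n ≤ ∑ i ∈ F j, b i := by
          intro j
          have hpj : p ∈ Q j ^ n := Submodule.mem_iInf _ |>.mp hp j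
          rw [hQ' j, span_mon_pow, mem_ideal_span_monomial_image] at hpj
          obtain ⟨si, ⟨M, hcard, hmem, rfl⟩, hsi⟩ := hpj b hb
          refine wt_of_single_decomp (F j) n b M hcard ?_ hsi
          intro x hx
          obtain ⟨i, hi, rfl⟩ := hmem x hx
          exact ⟨i, hi, rfl⟩
        obtain ⟨M, hMcard, hMmem, hMle⟩ :=
          key_comb F G n hn2 Hcov hsf Hlow Hmu b hτ
        exact ⟨M.sum, ⟨M, hMcard, fun x hx => Finset.mem_coe.mpr (hMmem x hx), rfl⟩, hMle⟩
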